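/- Let H = (V, E) be a finite hypergraph and L = {L_v}_{v∈V} a family of lists of positive integers such that |L_v| ≥ min(deg_H(v) + 1, s(H)) for every v ∈ V, where deg_H(v) is the number of hyperedges containing v and s(H) is the least positive integer s with |E| ≤ s(s−1)/2. Then H admits a unique-maximum coloring from L. -/
import Mathlib


/-- `sOf m` is the least positive integer `s` with `m ≤ s(s-1)/2`. -/
noncomputable def sOf (m : ℕ) : ℕ := sInf {s : ℕ | 0 < s ∧ m ≤ s * (s - 1) / 2}

lemma sOf_spec (m : ℕ) : 0 < sOf m ∧ m ≤ sOf m * (sOf m - 1) / 2 := by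
  have hne : {s : ℕ | 0 < s ∧ m ≤ s * (s - 1) / 2}.Nonempty := by
    refine ⟨m + 1, Nat.succ_pos m, ?_⟩
    have h2 : m * 2 ≤ (m + 1) * ((m + 1) - 1) := by
      simp only [Nat.add_sub_cancel]
      rcases Nat.eq_zero_or_pos m with h | h
      · simp [h]
      · nlinarith
    exact (Nat.le_div_iff_mul_le (by norm_num)).2 h2
  exact Nat.sInf_mem hne

lemma sOf_pos (m : ℕ) : 0 < sOf m := (sOf_spec m).1

lemma sOf_mono {m n : ℕ} (h : m ≤ n) : sOf m ≤ sOf n := by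
  apply Nat.sInf_le
  obtain ⟨h1, h2⟩ := sOf_spec n
  exact ⟨h1, le_trans h h2⟩

lemma two_le_sOf {m : ℕ} (hm : 0 < m) : 2 ≤ sOf m := by
  obtain ⟨h1, h2⟩ := sOf_spec m
  by_contra h
  have hs1 : sOf m = 1 := by omega
  rw [hs1] at h2
  simp at h2
  omega

lemma sOf_drop {m d : ℕ} (hm : 0 < m) (hd : sOf m - 1 ≤ d) :
    sOf (m - d) ≤ sOf m - 1 := by
  obtain ⟨h1, h2⟩ := sOf_spec m
  have hs2 : 2 ≤ sOf m := two_le_sOf hm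
  obtain ⟨t, ht⟩ : ∃ t, sOf m = t + 2 := ⟨sOf m - 2, by omega⟩
  rw [ht] at h2 hd ⊢
  have e1 : t + 2 - 1 = t + 1 := by omega
  rw [e1] at h2 hd ⊢
  have h2m : m * 2 ≤ (t + 2) * (t + 1) := by
    have hle := Nat.div_mul_le_self ((t + 2) * (t + 1)) 2
    have h3 := Nat.mul_le_mul_right 2 h2
    omega
  refine Nat.sInf_le ⟨by omega, ?_⟩
  have e2 : t + 1 - 1 = t := by omega
  rw [e2]
  refine (Nat.le_div_iff_mul_le (by norm_num)).2 ?_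
  have q1 : (t + 2) * (t + 1) = t * t + 3 * t + 2 := by ring
  have q2 : (t + 1) * t = t * t + t := by ring
  omega

/-- degree of a vertex in a hypergraph -/
def degH {V : Type} [DecidableEq V] (E : Finset (Finset V)) (v : V) : ℕ :=
  (E.filter (fun S => v ∈ S)).card

lemma degH_pos {V : Type} [DecidableEq V] {E : Finset (Finset V)} {S : Finset V}
    {v : V} (hS : S ∈ E) (hv : v ∈ S) : 0 < degH E v :=
  Finset.card_pos.2 ⟨S, Finset.mem_filter.2 ⟨hS, hv⟩⟩

lemma degH_mono {V : Type} [DecidableEq V] {E E' : Finset (Finset V)}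
    (h : E' ⊆ E) (v : V) : degH E' v ≤ degH E v :=
  Finset.card_le_card (Finset.filter_subset_filter _ h)

lemma um_key {V : Type} [Fintype V] [DecidableEq V] :
    ∀ (n : ℕ) (E : Finset (Finset V)) (L : V → Finset ℕ),
      E.card ≤ n →
      (∀ v : V, min (degH E v + 1) (sOf E.card) ≤ (L v).card) →
      ∃ C : V → ℕ, (∀ v, C v ∈ L v) ∧
        ∀ S ∈ E, S.Nonempty → ∃ v ∈ S, ∀ u ∈ S, u ≠ v → C u < C v := by
  intro n
  induction n with
  | zero =>
    intro E L hcard hsize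
    have hE : E = ∅ := Finset.card_eq_zero.mp (Nat.le_antisymm hcard (Nat.zero_le _))
    subst hE
    have hLne : ∀ v, (L v).Nonempty := by
      intro v
      refine Finset.card_pos.mp ?_
      have h := hsize v
      have h1 : 0 < sOf ((∅ : Finset (Finset V)).card) := sOf_pos _
      have h2 : min (degH (∅ : Finset (Finset V)) v + 1)
          (sOf ((∅ : Finset (Finset V)).card)) ≤ degH (∅ : Finset (Finset V)) v + 1 :=
        min_le_left _ _
      have h3 : min (degH (∅ : Finset (Finset V)) v + 1)
          (sOf ((∅ : Finset (Finset V)).card)) = degH (∅ : Finset (Finset V)) v + 1 ∨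
          min (degH (∅ : Finset (Finset V)) v + 1)
          (sOf ((∅ : Finset (Finset V)).card)) = sOf ((∅ : Finset (Finset V)).card) :=
        min_choice _ _
      omega
    exact ⟨fun v => (L v).min' (hLne v), fun v => Finset.min'_mem _ _, by simp⟩
  | succ n ih =>
    intro E L hcard hsize
    classical
    by_cases hAne : ((Finset.univ.filter (fun v : V => 0 < degH E v)).biUnion L).Nonempty
    · -- main case
      obtain ⟨M, hMeq⟩ : ∃ M, M = ((Finset.univ.filter
          (fun v : V => 0 < degH E v)).biUnion L).max' hAne := ⟨_, rfl⟩
      have hMmax : ∀ v : V, 0 < degH E v → ∀ c ∈ L v, c ≤ M := by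
        intro v hv c hc
        rw [hMeq]
        apply Finset.le_max'
        exact Finset.mem_biUnion.2 ⟨v, Finset.mem_filter.2 ⟨Finset.mem_univ v, hv⟩, hc⟩
      have hMA : M ∈ (Finset.univ.filter (fun v : V => 0 < degH E v)).biUnion L := by
        rw [hMeq]; exact Finset.max'_mem _ _
      obtain ⟨v0, hv0mem, hMv0⟩ := Finset.mem_biUnion.1 hMA
      have hv0deg : 0 < degH E v0 := (Finset.mem_filter.1 hv0mem).2
      have hEcard : 0 < E.card := by
        have h1 : degH E v0 ≤ E.card := Finset.card_le_card (Finset.filter_subset _ _)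
        omega
      obtain ⟨s, hs⟩ : ∃ s, s = sOf E.card := ⟨_, rfl⟩
      have hs2 : 2 ≤ s := hs ▸ two_le_sOf hEcard
      have hsizeS : ∀ v : V, min (degH E v + 1) s ≤ (L v).card := by
        intro v; rw [hs]; exact hsize v
      -- choose the vertex u
      have hu : ∃ u : V, M ∈ L u ∧ 0 < degH E u ∧
          (s - 1 ≤ degH E u ∨ ∀ v : V, M ∈ L v → degH E v + 1 ≤ s - 1) := by
        by_cases hcase : ∃ u : V, M ∈ L u ∧ s - 1 ≤ degH E u
        · obtain ⟨u, hMu, hdu⟩ := hcase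
          exact ⟨u, hMu, by omega, Or.inl hdu⟩
        · push_neg at hcase
          refine ⟨v0, hMv0, hv0deg, Or.inr ?_⟩
          intro v hv
          have := hcase v hv
          omega
      obtain ⟨u, hMu, hupos, hukey⟩ := hu
      obtain ⟨E', hE'⟩ : ∃ E', E' = E.filter (fun S => u ∉ S) := ⟨_, rfl⟩
      have hE'sub : E' ⊆ E := hE' ▸ Finset.filter_subset _ _
      have hE'card : E'.card + degH E u = E.card := by
        rw [hE']
        have h := Finset.card_filter_add_card_filter_not
          (s := E) (p := fun S => u ∈ S)
        show (E.filter (fun S => ¬ u ∈ S)).card + (E.filter (fun S => u ∈ S)).card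
          = E.card
        omega
      have hE'lt : E'.card < E.card := by omega
      have hdle : ∀ v, degH E' v ≤ degH E v := degH_mono hE'sub
      have hs'le : sOf E'.card ≤ s := hs ▸ sOf_mono (le_of_lt hE'lt)
      have hdlt : ∀ v : V, (∃ S ∈ E, u ∈ S ∧ v ∈ S) → degH E' v + 1 ≤ degH E v := by
        intro v ⟨S, hSE, huS, hvS⟩
        have hss : E'.filter (fun T => v ∈ T) ⊂ E.filter (fun T => v ∈ T) := by
          refine (Finset.ssubset_iff_of_subset
            (Finset.filter_subset_filter _ hE'sub)).2 ?_
          refine ⟨S, Finset.mem_filter.2 ⟨hSE, hvS⟩, ?_⟩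
          intro hmem
          have hmem2 := Finset.mem_filter.1 hmem
          rw [hE'] at hmem2
          exact (Finset.mem_filter.1 hmem2.1).2 huS
        have := Finset.card_lt_card hss
        show (E'.filter (fun T => v ∈ T)).card + 1 ≤ (E.filter (fun T => v ∈ T)).card
        omega
      obtain ⟨L', hL'⟩ : ∃ L' : V → Finset ℕ,
          L' = fun v => if v ≠ u ∧ ∃ S ∈ E, u ∈ S ∧ v ∈ S then (L v).erase M else L v :=
        ⟨_, rfl⟩
      have hL'v : ∀ v : V, ((v ≠ u ∧ ∃ S ∈ E, u ∈ S ∧ v ∈ S) → L' v = (L v).erase M) ∧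
          (¬ (v ≠ u ∧ ∃ S ∈ E, u ∈ S ∧ v ∈ S) → L' v = L v) := by
        intro v
        constructor <;> intro h <;> simp only [hL']
        · rw [if_pos h]
        · rw [if_neg h]
      have hsize' : ∀ v : V, min (degH E' v + 1) (sOf E'.card) ≤ (L' v).card := by
        intro v
        have hLv := hsizeS v
        have hminle1 : min (degH E' v + 1) (sOf E'.card) ≤ degH E' v + 1 :=
          min_le_left _ _
        have hminle2 : min (degH E' v + 1) (sOf E'.card) ≤ sOf E'.card :=
          min_le_right _ _
        have hdlev := hdle v
        by_cases hv : v ≠ u ∧ ∃ S ∈ E, u ∈ S ∧ v ∈ S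
        · rw [(hL'v v).1 hv]
          have hd : degH E' v + 1 ≤ degH E v := hdlt v hv.2
          by_cases hMv : M ∈ L v
          · rw [Finset.card_erase_of_mem hMv]
            have key : min (degH E' v + 1) (sOf E'.card) + 1 ≤ min (degH E v + 1) s := by
              rcases le_or_gt (degH E v + 1) s with h | h
              · rw [min_eq_left h]
                omega
              · rw [min_eq_right (le_of_lt h)]
                rcases hukey with hk | hk
                · have hdrop : sOf E'.card ≤ s - 1 := by
                    have hEq : E'.card = E.card - degH E u := by omega
                    rw [hEq, hs]
                    exact sOf_drop hEcard (hs ▸ hk)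
                  omega
                · have := hk v hMv
                  omega
            omega
          · rw [Finset.erase_eq_of_notMem hMv]
            refine le_trans (le_min ?_ ?_) hLv
            · omega
            · exact le_trans hminle2 hs'le
        · rw [(hL'v v).2 hv]
          refine le_trans (le_min ?_ ?_) hLv
          · omega
          · exact le_trans hminle2 hs'le
      obtain ⟨C', hC'mem, hC'um⟩ := ih E' L' (by omega) hsize'
      obtain ⟨C, hCdef⟩ : ∃ C : V → ℕ, C = Function.update C' u M := ⟨_, rfl⟩
      have hCu : C u = M := by rw [hCdef]; exact Function.update_self u M C'
      have hCne : ∀ w : V, w ≠ u → C w = C' w := by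
        intro w hw
        rw [hCdef]
        exact Function.update_of_ne hw M C'
      have hCmem : ∀ v, C v ∈ L v := by
        intro v
        by_cases hvu : v = u
        · rw [hvu, hCu]; exact hMu
        · rw [hCne v hvu]
          have hmem := hC'mem v
          by_cases h : v ≠ u ∧ ∃ S ∈ E, u ∈ S ∧ v ∈ S
          · rw [(hL'v v).1 h] at hmem
            exact Finset.mem_of_mem_erase hmem
          · rw [(hL'v v).2 h] at hmem
            exact hmem
      have hCltM : ∀ w : V, w ≠ u → (∃ S ∈ E, u ∈ S ∧ w ∈ S) → C w < M := by
        intro w hwu hnb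
        have hmem := hC'mem w
        rw [(hL'v w).1 ⟨hwu, hnb⟩] at hmem
        have hne : C' w ≠ M := Finset.ne_of_mem_erase hmem
        have hinL : C' w ∈ L w := Finset.mem_of_mem_erase hmem
        have hwdeg : 0 < degH E w := by
          obtain ⟨S, hSE, _, hwS⟩ := hnb
          exact degH_pos hSE hwS
        have hle : C' w ≤ M := hMmax w hwdeg _ hinL
        rw [hCne w hwu]
        omega
      refine ⟨C, hCmem, ?_⟩
      intro S hSE hSne
      by_cases huS : u ∈ S
      · refine ⟨u, huS, ?_⟩
        intro w hwS hwu
        rw [hCu]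
        exact hCltM w hwu ⟨S, hSE, huS, hwS⟩
      · have hSE' : S ∈ E' := by
          rw [hE']
          exact Finset.mem_filter.2 ⟨hSE, huS⟩
        obtain ⟨v, hvS, hmax⟩ := hC'um S hSE' hSne
        refine ⟨v, hvS, ?_⟩
        intro w hwS hwv
        have hwu : w ≠ u := fun h => huS (h ▸ hwS)
        have hvu : v ≠ u := fun h => huS (h ▸ hvS)
        rw [hCne w hwu, hCne v hvu]
        exact hmax w hwS hwv
    · -- every edge is empty
      have hLne : ∀ v, (L v).Nonempty := by
        intro v
        refine Finset.card_pos.mp ?_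
        have h := hsize v
        have h1 : 0 < sOf E.card := sOf_pos E.card
        have h3 : min (degH E v + 1) (sOf E.card) = degH E v + 1 ∨
            min (degH E v + 1) (sOf E.card) = sOf E.card := min_choice _ _
        omega
      refine ⟨fun v => (L v).min' (hLne v), fun v => Finset.min'_mem _ _, ?_⟩
      intro S hSE hSne
      exfalso
      obtain ⟨v, hvS⟩ := hSne
      have hvdeg : 0 < degH E v := degH_pos hSE hvS
      refine hAne ⟨(L v).min' (hLne v), ?_⟩
      exact Finset.mem_biUnion.2
        ⟨v, Finset.mem_filter.2 ⟨Finset.mem_univ v, hvdeg⟩, Finset.min'_mem _ _⟩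

/-- If every list `L_v` (of positive integers) satisfies
`|L_v| ≥ min(deg_H(v) + 1, s(H))`, then `H` admits a unique-maximum coloring
from the lists. -/
theorem um_coloring_from_lists_degree {V : Type} [Fintype V] [DecidableEq V]
    (E : Finset (Finset V)) (L : V → Finset ℕ)
    (hpos : ∀ v : V, ∀ c ∈ L v, 0 < c)
    (hsize : ∀ v : V,
      min ((E.filter (fun S => v ∈ S)).card + 1) (sOf E.card) ≤ (L v).card) :
    ∃ C : V → ℕ, (∀ v, C v ∈ L v) ∧
      ∀ S ∈ E, S.Nonempty → ∃ v ∈ S, ∀ u ∈ S, u ≠ v → C u < C v := by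
  exact um_key E.card E L le_rfl hsize
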